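/- For integers t ≥ 1 and x, y, z ≥ 0 with x+y+z = t and z > x, the multinomial identity multinomial(t−1; x, y, z−1) − multinomial(t−1; z, y, x−1) = ((z−x)/t)·multinomial(t; x, y, z) holds, where multinomial(m; a,b,c) = m!/(a!b!c!) and a term is 0 if any index is negative. -/
import Mathlib


/-- Trinomial coefficient `m!/(a!b!c!)` with integer indices, zero unless all indices are
nonnegative and sum to `m`. -/
def trinom (m : ℕ) (a b c : ℤ) : ℕ :=
  if 0 ≤ a ∧ 0 ≤ b ∧ 0 ≤ c ∧ a + b + c = m then
    m.factorial / (a.toNat.factorial * b.toNat.factorial * c.toNat.factorial)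
  else 0

lemma trinom_dvd (a b c : ℕ) :
    a.factorial * b.factorial * c.factorial ∣ (a + b + c).factorial := by
  have h1 : b.factorial * c.factorial ∣ (b + c).factorial :=
    Nat.factorial_mul_factorial_dvd_factorial_add b c
  have h2 : a.factorial * (b + c).factorial ∣ (a + (b + c)).factorial :=
    Nat.factorial_mul_factorial_dvd_factorial_add a (b + c)
  calc a.factorial * b.factorial * c.factorial
      = a.factorial * (b.factorial * c.factorial) := by ring
    _ ∣ a.factorial * (b + c).factorial := mul_dvd_mul_left _ h1
    _ ∣ (a + (b + c)).factorial := h2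
    _ = (a + b + c).factorial := by rw [add_assoc]

lemma trinom_key (m a b c : ℕ) (h : a + b + c = m) :
    (trinom m (a : ℤ) (b : ℤ) (c : ℤ) : ℤ) *
      (a.factorial * b.factorial * c.factorial) = m.factorial := by
  have hcond : (0:ℤ) ≤ a ∧ (0:ℤ) ≤ b ∧ (0:ℤ) ≤ c ∧ (a:ℤ) + b + c = m := by
    refine ⟨Int.natCast_nonneg a, Int.natCast_nonneg b, Int.natCast_nonneg c, ?_⟩
    exact_mod_cast congrArg (Nat.cast : ℕ → ℤ) h
  have hnat : trinom m (a : ℤ) (b : ℤ) (c : ℤ) *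
      (a.factorial * b.factorial * c.factorial) = m.factorial := by
    unfold trinom
    rw [if_pos hcond]
    simp only [Int.toNat_natCast]
    exact Nat.div_mul_cancel (h ▸ trinom_dvd a b c)
  exact_mod_cast congrArg (Nat.cast : ℕ → ℤ) hnat

lemma trinom_neg (m : ℕ) (a b c : ℤ) (hc : c < 0) : trinom m a b c = 0 := by
  unfold trinom
  rw [if_neg]
  rintro ⟨-, -, h, -⟩
  omega

theorem trinomial_identity (t : ℕ) (ht : 1 ≤ t) (x y z : ℕ)
    (hsum : x + y + z = t) (hzx : x < z) :
    (t : ℤ) * ((trinom (t - 1) x y ((z : ℤ) - 1) : ℤ) -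
        (trinom (t - 1) z y ((x : ℤ) - 1) : ℤ)) =
      ((z : ℤ) - (x : ℤ)) * (trinom t x y z : ℤ) := by
  have hz : 1 ≤ z := Nat.lt_of_le_of_lt (Nat.zero_le x) hzx
  have hF : (0:ℤ) < (x.factorial * y.factorial * z.factorial : ℤ) := by
    positivity
  apply mul_right_cancel₀ (ne_of_gt hF)
  have hzc : ((z : ℤ) - 1) = ((z - 1 : ℕ) : ℤ) := by
    push_cast [Nat.cast_sub hz]; ring
  -- first term
  have hA : (trinom (t - 1) x y ((z : ℤ) - 1) : ℤ) *
      (x.factorial * y.factorial * (z - 1).factorial) = (t - 1).factorial := by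
    rw [hzc]
    exact trinom_key (t - 1) x y (z - 1) (by omega)
  have hzfac : (z.factorial : ℤ) = z * (z - 1).factorial := by
    have : z.factorial = z * (z - 1).factorial := by
      conv_lhs => rw [show z = (z - 1) + 1 by omega]
      rw [Nat.factorial_succ]
      congr 1
      omega
    exact_mod_cast congrArg (Nat.cast : ℕ → ℤ) this
  have hA' : (trinom (t - 1) x y ((z : ℤ) - 1) : ℤ) *
      (x.factorial * y.factorial * z.factorial) = z * (t - 1).factorial := by
    rw [hzfac]
    calc (trinom (t - 1) x y ((z : ℤ) - 1) : ℤ) *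
        (x.factorial * y.factorial * ((z:ℤ) * (z - 1).factorial))
        = ((trinom (t - 1) x y ((z : ℤ) - 1) : ℤ) *
          (x.factorial * y.factorial * (z - 1).factorial)) * z := by ring
      _ = z * (t - 1).factorial := by rw [hA]; ring
  -- second term
  have hB' : (trinom (t - 1) z y ((x : ℤ) - 1) : ℤ) *
      (x.factorial * y.factorial * z.factorial) = x * (t - 1).factorial := by
    rcases Nat.eq_zero_or_pos x with hx0 | hx1
    · subst hx0
      rw [trinom_neg (t-1) z y (((0:ℕ):ℤ) - 1) (by norm_num)]
      norm_num
    · have hxc : ((x : ℤ) - 1) = ((x - 1 : ℕ) : ℤ) := by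
        push_cast [Nat.cast_sub hx1]; ring
      have hB : (trinom (t - 1) z y ((x : ℤ) - 1) : ℤ) *
          (z.factorial * y.factorial * (x - 1).factorial) = (t - 1).factorial := by
        rw [hxc]
        exact trinom_key (t - 1) z y (x - 1) (by omega)
      have hxfac : (x.factorial : ℤ) = x * (x - 1).factorial := by
        have : x.factorial = x * (x - 1).factorial := by
          conv_lhs => rw [show x = (x - 1) + 1 by omega]
          rw [Nat.factorial_succ]
          congr 1
          omega
        exact_mod_cast congrArg (Nat.cast : ℕ → ℤ) this
      rw [hxfac]
      calc (trinom (t - 1) z y ((x : ℤ) - 1) : ℤ) *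
          ((x:ℤ) * (x - 1).factorial * y.factorial * z.factorial)
          = ((trinom (t - 1) z y ((x : ℤ) - 1) : ℤ) *
            (z.factorial * y.factorial * (x - 1).factorial)) * x := by ring
        _ = x * (t - 1).factorial := by rw [hB]; ring
  have hC : (trinom t (x:ℤ) y z : ℤ) *
      (x.factorial * y.factorial * z.factorial) = t.factorial := trinom_key t x y z hsum
  have htfac : (t.factorial : ℤ) = t * (t - 1).factorial := by
    have : t.factorial = t * (t - 1).factorial := by
      conv_lhs => rw [show t = (t - 1) + 1 by omega]
      rw [Nat.factorial_succ]
      congr 1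
      omega
    exact_mod_cast congrArg (Nat.cast : ℕ → ℤ) this
  calc (t : ℤ) * ((trinom (t - 1) x y ((z : ℤ) - 1) : ℤ) -
        (trinom (t - 1) z y ((x : ℤ) - 1) : ℤ)) *
        (x.factorial * y.factorial * z.factorial)
      = (t : ℤ) * ((trinom (t - 1) x y ((z : ℤ) - 1) : ℤ) *
          (x.factorial * y.factorial * z.factorial) -
        (trinom (t - 1) z y ((x : ℤ) - 1) : ℤ) *
          (x.factorial * y.factorial * z.factorial)) := by ring
    _ = (t : ℤ) * ((z:ℤ) * (t-1).factorial - (x:ℤ) * (t-1).factorial) := by rw [hA', hB']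
    _ = ((z:ℤ) - x) * ((t:ℤ) * (t-1).factorial) := by ring
    _ = ((z:ℤ) - x) * t.factorial := by rw [htfac]
    _ = ((z : ℤ) - (x : ℤ)) * (trinom t x y z : ℤ) *
        (x.factorial * y.factorial * z.factorial) := by rw [← hC]; ring
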